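/- Let z̄ = (1/K)∑_{k=1}^K z_k and t̄ = (1/K)∑_{k=1}^K t_k be averages of i.i.d. random variables with z_k ∈ {-1,1}, E[z_k] = tanh(v/2), t_k > 0 bounded with E[t_k] = tanh(v/2)/(2v) (v ≠ 0), t̄ ≥ c > 0 a.s., and Var(t_k) < ∞. Then E[(z̄/t̄ - 2v)²] ≤ C/K for some constant C. -/

import Mathlib

open MeasureTheory ProbabilityTheory Finset
open scoped ProbabilityTheory

/-- For i.i.d. pairs `(z_k, t_k)` with `z_k ∈ {-1,1}`, `E[z_k] = tanh(v/2)`,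
`0 < t_k ≤ B` with `E[t_k] = tanh(v/2)/(2v)` (`v ≠ 0`), and `t̄ ≥ c > 0` a.s., the
empirical ratio satisfies `E[(z̄/t̄ - 2v)²] ≤ C/K` for some constant `C`. -/
theorem empirical_ratio_rate {Ω : Type*} [MeasureSpace Ω]
    [IsProbabilityMeasure (ℙ : Measure Ω)]
    (z t : ℕ → Ω → ℝ) (hzm : ∀ k, Measurable (z k)) (htm : ∀ k, Measurable (t k))
    (hiid : iIndepFun (fun k ω => (z k ω, t k ω)) ℙ)
    (hid : ∀ k, IdentDistrib (fun ω => (z k ω, t k ω)) (fun ω => (z 0 ω, t 0 ω)) ℙ ℙ)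
    (hzval : ∀ k ω, z k ω = 1 ∨ z k ω = -1)
    (Bnd : ℝ) (htb : ∀ k ω, 0 < t k ω ∧ t k ω ≤ Bnd)
    (v : ℝ) (hv : v ≠ 0)
    (hEz : ∫ ω, z 0 ω = Real.tanh (v / 2))
    (hEt : ∫ ω, t 0 ω = Real.tanh (v / 2) / (2 * v))
    (c : ℝ) (hc : 0 < c)
    (htbar : ∀ K : ℕ, 0 < K → ∀ᵐ ω, c ≤ (1 / (K : ℝ)) * ∑ k ∈ range K, t k ω) :
    ∃ C : ℝ, ∀ K : ℕ, 0 < K →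
      ∫ ω, (((1 / (K : ℝ)) * ∑ k ∈ range K, z k ω) /
              ((1 / (K : ℝ)) * ∑ k ∈ range K, t k ω) - 2 * v) ^ 2 ≤ C / K := by
  classical
  set w : ℕ → Ω → ℝ := fun k ω => z k ω - 2 * v * t k ω with hw
  have hne : Nonempty Ω := by
    by_contra h
    rw [not_nonempty_iff] at h
    have h1 := measure_univ (μ := (ℙ : Measure Ω))
    rw [Set.univ_eq_empty_iff.mpr h, measure_empty] at h1
    exact zero_ne_one h1
  obtain ⟨ω0⟩ := hne
  have hBnd : 0 < Bnd := lt_of_lt_of_le (htb 0 ω0).1 (htb 0 ω0).2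
  set M : ℝ := 1 + 2 * |v| * Bnd with hM
  have hM0 : 0 < M := by positivity
  have hwm : ∀ k, Measurable (w k) := fun k => (hzm k).sub ((htm k).const_mul (2 * v))
  have hzb : ∀ k ω, |z k ω| ≤ 1 := by
    intro k ω; rcases hzval k ω with h | h <;> rw [h] <;> simp
  have htbabs : ∀ k ω, |t k ω| ≤ Bnd := by
    intro k ω; rw [abs_of_pos (htb k ω).1]; exact (htb k ω).2
  have hwbd : ∀ k ω, |w k ω| ≤ M := by
    intro k ω
    calc |w k ω| ≤ |z k ω| + |2 * v * t k ω| := abs_sub _ _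
    _ ≤ 1 + 2 * |v| * Bnd := by
        gcongr
        · exact hzb k ω
        · rw [abs_mul, abs_mul, abs_two]
          gcongr
          exact htbabs k ω
  -- MemLp 2 for w
  have hwmem : ∀ k, MemLp (w k) 2 ℙ := by
    intro k
    exact (memLp_top_of_bound (hwm k).aestronglyMeasurable M
      (Filter.Eventually.of_forall (hwbd k))).mono_exponent le_top
  have hwint : ∀ k, Integrable (w k) := fun k => (hwmem k).integrable one_le_two
  -- identical distribution of w k
  have hfm : Measurable fun p : ℝ × ℝ => p.1 - 2 * v * p.2 := by fun_prop
  have hwid : ∀ k, IdentDistrib (w k) (w 0) ℙ ℙ := fun k => (hid k).comp hfm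
  -- mean zero
  have hzint : ∀ k, Integrable (z k) := by
    intro k
    exact ((memLp_top_of_bound (hzm k).aestronglyMeasurable 1
      (Filter.Eventually.of_forall (hzb k))).mono_exponent (le_top (a := 1))).integrable le_rfl
  have htint : ∀ k, Integrable (t k) := by
    intro k
    exact ((memLp_top_of_bound (htm k).aestronglyMeasurable Bnd
      (Filter.Eventually.of_forall (htbabs k))).mono_exponent (le_top (a := 1))).integrable le_rfl
  have hEw0 : ∫ ω, w 0 ω = 0 := by
    have : ∫ ω, w 0 ω = (∫ ω, z 0 ω) - 2 * v * ∫ ω, t 0 ω := by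
      rw [← integral_const_mul]
      exact integral_sub (hzint 0) ((htint 0).const_mul _)
    rw [this, hEz, hEt]
    field_simp
    ring
  have hEw : ∀ k, ∫ ω, w k ω = 0 := fun k => ((hwid k).integral_eq).trans hEw0
  -- independence of the w's
  have hiidw : iIndepFun w ℙ :=
    hiid.comp (fun _ => fun p : ℝ × ℝ => p.1 - 2 * v * p.2) (fun _ => hfm)
  set σ2 : ℝ := variance (w 0) ℙ with hσ2
  have hσ2nn : 0 ≤ σ2 := variance_nonneg _ _
  refine ⟨σ2 / c ^ 2, fun K hK => ?_⟩
  have hKpos : (0 : ℝ) < K := Nat.cast_pos.mpr hK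
  set S : Ω → ℝ := fun ω => ∑ k ∈ range K, w k ω with hS
  have hSmem : MemLp S 2 ℙ := by
    have := memLp_finset_sum (range K) (fun k _ => hwmem k)
    simpa [hS] using this
  have hES : ∫ ω, S ω = 0 := by
    rw [hS, integral_finset_sum _ (fun k _ => hwint k)]
    simp [hEw]
  have hVarS : variance S ℙ = K * σ2 := by
    have := IndepFun.variance_sum (μ := ℙ) (X := w) (s := range K)
      (fun k _ => hwmem k)
      (fun i hi j hj hij => hiidw.indepFun hij)
    rw [hS]
    have hsum : ∑ i ∈ range K, variance (w i) ℙ = K * σ2 := by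
      rw [Finset.sum_congr rfl (fun i _ => (hwid i).variance_eq)]
      simp [hσ2, mul_comm]
    calc variance (fun ω => ∑ k ∈ range K, w k ω) ℙ
        = variance (∑ k ∈ range K, w k) ℙ := by congr 1; ext ω; simp
      _ = ∑ i ∈ range K, variance (w i) ℙ := this
      _ = K * σ2 := hsum
  have hES2 : ∫ ω, (S ω) ^ 2 = K * σ2 := by
    have := variance_eq_sub (μ := ℙ) hSmem
    have h2 : (∫ ω, (S ω) ^ 2) = variance S ℙ + (∫ ω, S ω) ^ 2 := by
      simp only [Pi.pow_apply] at this
      linarith [this]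
    rw [h2, hES, hVarS]; ring
  -- pointwise a.e. bound
  have hmain : ∀ᵐ ω, (((1 / (K : ℝ)) * ∑ k ∈ range K, z k ω) /
              ((1 / (K : ℝ)) * ∑ k ∈ range K, t k ω) - 2 * v) ^ 2
      ≤ (1 / c ^ 2) * ((1 / (K : ℝ)) * S ω) ^ 2 := by
    filter_upwards [htbar K hK] with ω hω
    set zb := (1 / (K : ℝ)) * ∑ k ∈ range K, z k ω
    set tb := (1 / (K : ℝ)) * ∑ k ∈ range K, t k ω
    have htb0 : 0 < tb := lt_of_lt_of_le hc hω
    have hwb : (1 / (K : ℝ)) * S ω = zb - 2 * v * tb := by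
      simp only [hS, zb, tb, Finset.mul_sum, ← Finset.sum_sub_distrib]
      congr 1; ext k; ring
    have heq : zb / tb - 2 * v = ((1 / (K : ℝ)) * S ω) / tb := by
      rw [hwb]; field_simp
    rw [heq, div_pow]
    rw [div_le_iff₀ (by positivity)]
    calc ((1 / (K : ℝ)) * S ω) ^ 2
        = (1 / c ^ 2) * (((1 / (K : ℝ)) * S ω) ^ 2 * c ^ 2) := by field_simp
      _ ≤ (1 / c ^ 2) * (((1 / (K : ℝ)) * S ω) ^ 2 * tb ^ 2) := by gcongr
      _ = 1 / c ^ 2 * ((1 / (K : ℝ)) * S ω) ^ 2 * tb ^ 2 := by ring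
  -- integrability of both sides
  have hSbd : ∀ ω, |S ω| ≤ K * M := by
    intro ω
    calc |S ω| ≤ ∑ k ∈ range K, |w k ω| := Finset.abs_sum_le_sum_abs _ _
    _ ≤ ∑ k ∈ range K, M := Finset.sum_le_sum (fun k _ => hwbd k ω)
    _ = K * M := by simp [mul_comm]
  have hSm : Measurable S := Finset.measurable_sum _ (fun k _ => hwm k)
  have hrhs_int : Integrable (fun ω => (1 / c ^ 2) * ((1 / (K : ℝ)) * S ω) ^ 2) := by
    apply Integrable.const_mul
    have : Integrable (fun ω => ((1 / (K : ℝ)) * S ω) ^ 2) := by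
      apply (memLp_top_of_bound ((hSm.const_mul _).pow_const 2).aestronglyMeasurable
        ((M) ^ 2) ?_).mono_exponent (le_top (a := 1)) |>.integrable le_rfl
      filter_upwards with ω
      rw [Real.norm_eq_abs, abs_of_nonneg (by positivity), mul_pow]
      have h1 : |(1 / (K : ℝ)) * S ω| ≤ M := by
        rw [abs_mul, abs_of_nonneg (by positivity : (0:ℝ) ≤ 1 / (K:ℝ))]
        calc (1 / (K : ℝ)) * |S ω| ≤ (1 / (K : ℝ)) * (K * M) := by
              gcongr; exact hSbd ω
        _ = M := by field_simp
      calc (1 / (K : ℝ)) ^ 2 * S ω ^ 2 = ((1 / (K : ℝ)) * S ω) ^ 2 := by ring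
      _ = |(1 / (K : ℝ)) * S ω| ^ 2 := (sq_abs _).symm
      _ ≤ M ^ 2 := by gcongr
    exact this
  have hlhs_m : Measurable fun ω => (((1 / (K : ℝ)) * ∑ k ∈ range K, z k ω) /
              ((1 / (K : ℝ)) * ∑ k ∈ range K, t k ω) - 2 * v) ^ 2 := by
    apply Measurable.pow_const
    apply Measurable.sub_const
    exact ((Finset.measurable_sum _ (fun k _ => hzm k)).const_mul _).div
      ((Finset.measurable_sum _ (fun k _ => htm k)).const_mul _)
  have hlhs_int : Integrable (fun ω => (((1 / (K : ℝ)) * ∑ k ∈ range K, z k ω) /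
              ((1 / (K : ℝ)) * ∑ k ∈ range K, t k ω) - 2 * v) ^ 2) := by
    apply (memLp_top_of_bound hlhs_m.aestronglyMeasurable ((1 / c + 2 * |v|) ^ 2) ?_).mono_exponent (le_top (a := 1)) |>.integrable le_rfl
    filter_upwards [htbar K hK] with ω hω
    set zb := (1 / (K : ℝ)) * ∑ k ∈ range K, z k ω
    set tb := (1 / (K : ℝ)) * ∑ k ∈ range K, t k ω
    have htb0 : 0 < tb := lt_of_lt_of_le hc hω
    have hzbb : |zb| ≤ 1 := by
      rw [abs_mul, abs_of_nonneg (by positivity : (0:ℝ) ≤ 1 / (K:ℝ))]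
      calc (1 / (K : ℝ)) * |∑ k ∈ range K, z k ω| ≤ (1 / (K : ℝ)) * (K * 1) := by
            gcongr
            calc |∑ k ∈ range K, z k ω| ≤ ∑ k ∈ range K, |z k ω| :=
                  Finset.abs_sum_le_sum_abs _ _
            _ ≤ ∑ k ∈ range K, 1 := Finset.sum_le_sum (fun k _ => hzb k ω)
            _ = K * 1 := by simp [mul_comm]
      _ = 1 := by field_simp
    rw [Real.norm_eq_abs, abs_of_nonneg (by positivity), ← sq_abs]
    gcongr
    calc |zb / tb - 2 * v| ≤ |zb / tb| + |2 * v| := abs_sub _ _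
    _ ≤ 1 / c + 2 * |v| := by
        gcongr
        · rw [abs_div, abs_of_pos htb0]
          exact div_le_div₀ zero_le_one hzbb hc hω
        · rw [abs_mul, abs_two]
  -- final computation
  calc ∫ ω, (((1 / (K : ℝ)) * ∑ k ∈ range K, z k ω) /
              ((1 / (K : ℝ)) * ∑ k ∈ range K, t k ω) - 2 * v) ^ 2
      ≤ ∫ ω, (1 / c ^ 2) * ((1 / (K : ℝ)) * S ω) ^ 2 :=
        integral_mono_ae hlhs_int hrhs_int hmain
    _ = (1 / c ^ 2) * ((1 / (K : ℝ)) ^ 2 * ∫ ω, (S ω) ^ 2) := by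
        rw [integral_const_mul]
        congr 1
        rw [← integral_const_mul]
        congr 1; ext ω; ring
    _ = σ2 / c ^ 2 / K := by
        rw [hES2]; field_simp
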